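/- arXiv:0907.1971 — 2 statements merged into one kernel-verified Lean document; each statement's English description precedes it below -/
import Mathlib

section
/- Let k be a field with the following system-solvability (Tsen–Lang) property: for every N ≥ 1 and every finite family g_1, …, g_m ∈ k[Y_1, …, Y_N] of homogeneous polynomials of degrees e_1, …, e_m with e_j ≥ 1 for all j and ∑_{j=1}^m e_j < N, there exists a nonzero y ∈ k^N with g_j(y) = 0 for all j. Let f_1, …, f_r ∈ k[X_0, …, X_n] be homogeneous polynomials of respective degrees d_1, …, d_r with d_i ≥ 1 for all i and ∑_{i=1}^r d_i² ≤ n. Let a, b ∈ k^{n+1} be linearly independent vectors satisfying f_i(a) = 0 and f_i(b) = 0 for all i. Then there exists a nonzero vector c ∈ k^{n+1} such that for every i, the polynomial f_i(s·a + t·c) ∈ k[s,t] obtained by substituting X_m ↦ s·a_m + t·c_m is the zero polynomial, and likewise f_i(s·b + t·c) is the zero polynomial of k[s,t]. -/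
open MvPolynomial

section Aux

variable {k : Type*} [Field k]

lemma aux_pow_diff {σ : Type*} (v : k) (m : σ) (e : ℕ) :
    e = 0 ∨ (((C v + X m : MvPolynomial σ k) ^ e) - X m ^ e).totalDegree < e := by
  rcases Nat.eq_zero_or_pos e with h | h
  · exact Or.inl h
  right
  have h0 : (0 : ℕ) ∈ Finset.range (e + 1) := Finset.mem_range.mpr (Nat.succ_pos e)
  rw [add_pow, ← Finset.add_sum_erase _ _ h0]
  simp only [pow_zero, one_mul, Nat.sub_zero, Nat.choose_zero_right, Nat.cast_one, mul_one]
  rw [add_sub_cancel_left]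
  refine lt_of_le_of_lt (totalDegree_finset_sum _ _) ?_
  rw [Finset.sup_lt_iff (show (⊥ : ℕ) < e by simpa using h)]
  intro i hi
  have hi0 : i ≠ 0 := (Finset.mem_erase.mp hi).1
  calc ((C v : MvPolynomial σ k) ^ i * X m ^ (e - i) * (e.choose i : MvPolynomial σ k)).totalDegree
      ≤ ((C v : MvPolynomial σ k) ^ i * X m ^ (e - i)).totalDegree
          + ((e.choose i : MvPolynomial σ k)).totalDegree := totalDegree_mul _ _
    _ ≤ (((C v : MvPolynomial σ k) ^ i).totalDegree
          + ((X m : MvPolynomial σ k) ^ (e - i)).totalDegree) + 0 := by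
        rw [← C_eq_coe_nat, totalDegree_C]
        exact add_le_add (totalDegree_mul _ _) le_rfl
    _ ≤ (0 + (e - i) * 1) + 0 := by
        refine add_le_add (add_le_add ?_ ?_) le_rfl
        · rw [← C_pow, totalDegree_C]
        · exact le_trans (totalDegree_pow _ _) (by rw [totalDegree_X])
    _ < e := by simpa using Nat.sub_lt h (Nat.pos_of_ne_zero hi0)

lemma aux_prod_diff {σ : Type*} [DecidableEq σ] (v : σ → k) (u : σ →₀ ℕ) (S : Finset σ) :
    (∏ m ∈ S, (C (v m) + X m : MvPolynomial σ k) ^ u m) = ∏ m ∈ S, (X m : MvPolynomial σ k) ^ u m ∨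
    ((∏ m ∈ S, (C (v m) + X m : MvPolynomial σ k) ^ u m)
      - ∏ m ∈ S, (X m : MvPolynomial σ k) ^ u m).totalDegree < ∑ m ∈ S, u m := by
  induction S using Finset.induction_on with
  | empty => exact Or.inl (by simp)
  | @insert m S hm ih =>
    rw [Finset.prod_insert hm, Finset.prod_insert hm, Finset.sum_insert hm]
    have hQ : (∏ m ∈ S, (C (v m) + X m : MvPolynomial σ k) ^ u m).totalDegree ≤ ∑ m ∈ S, u m := by
      refine le_trans (totalDegree_finset_prod _ _) (Finset.sum_le_sum fun m' _ => ?_)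
      refine le_trans (totalDegree_pow _ _) ?_
      have h1 : (C (v m') + X m' : MvPolynomial σ k).totalDegree ≤ 1 :=
        le_trans (totalDegree_add _ _) (by simp [totalDegree_C, totalDegree_X])
      calc u m' * (C (v m') + X m' : MvPolynomial σ k).totalDegree ≤ u m' * 1 :=
            Nat.mul_le_mul_left _ h1
        _ = u m' := mul_one _
    have hP : (∏ m ∈ S, (X m : MvPolynomial σ k) ^ u m).totalDegree ≤ ∑ m ∈ S, u m := by
      refine le_trans (totalDegree_finset_prod _ _) (Finset.sum_le_sum fun m' _ => ?_)
      exact le_trans (totalDegree_pow _ _) (by rw [totalDegree_X, mul_one])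
    rcases aux_pow_diff (v m) m (u m) with he | hR
    · rcases ih with ihe | ihl
      · exact Or.inl (by rw [he, ihe]; simp)
      · right
        simp only [he, pow_zero, one_mul, zero_add]
        exact ihl
    · right
      have he1 : 0 < u m := Nat.lt_of_le_of_lt (Nat.zero_le _) hR
      have key : (C (v m) + X m : MvPolynomial σ k) ^ u m
            * (∏ m ∈ S, (C (v m) + X m : MvPolynomial σ k) ^ u m)
            - (X m : MvPolynomial σ k) ^ u m * ∏ m ∈ S, (X m : MvPolynomial σ k) ^ u m
          = ((C (v m) + X m : MvPolynomial σ k) ^ u m - X m ^ u m)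
              * (∏ m ∈ S, (C (v m) + X m : MvPolynomial σ k) ^ u m)
            + (X m : MvPolynomial σ k) ^ u m
              * ((∏ m ∈ S, (C (v m) + X m : MvPolynomial σ k) ^ u m)
                  - ∏ m ∈ S, (X m : MvPolynomial σ k) ^ u m) := by ring
      rw [key]
      refine lt_of_le_of_lt (totalDegree_add _ _) ?_
      rw [max_lt_iff]
      constructor
      · exact lt_of_le_of_lt (totalDegree_mul _ _) (Nat.add_lt_add_of_lt_of_le hR hQ)
      · rcases ih with ihe | ihl
        · rw [ihe, sub_self, mul_zero]
          simpa using Nat.lt_of_lt_of_le he1 (Nat.le_add_right _ _)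
        · refine lt_of_le_of_lt (totalDegree_mul _ _) ?_
          have hX : ((X m : MvPolynomial σ k) ^ u m).totalDegree ≤ u m :=
            le_trans (totalDegree_pow _ _) (by rw [totalDegree_X, mul_one])
          exact Nat.add_lt_add_of_le_of_lt hX ihl

lemma aux_deg_univ {σ : Type*} [Fintype σ] {f : MvPolynomial σ k} {δ : ℕ}
    (hf : f.IsHomogeneous δ) {u : σ →₀ ℕ} (hu : u ∈ f.support) : ∑ m, u m = δ := by
  have h1 : u.degree = δ := by
    rw [Finsupp.degree_eq_weight_one]
    exact hf (mem_support_iff.mp hu)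
  rw [← h1, Finsupp.degree]
  exact (Finset.sum_subset (Finset.subset_univ _)
    (fun i _ hi => Finsupp.notMem_support_iff.mp hi)).symm

lemma aux_shift_diff {σ : Type*} [Fintype σ] [DecidableEq σ] (v : σ → k)
    {f : MvPolynomial σ k} {δ : ℕ} (hf : f.IsHomogeneous δ) (hδ : 1 ≤ δ) :
    ((aeval (fun m => C (v m) + X m) f : MvPolynomial σ k) - f).totalDegree < δ := by
  conv_lhs => rw [f.as_sum, map_sum, ← Finset.sum_sub_distrib]
  refine lt_of_le_of_lt (totalDegree_finset_sum _ _) ?_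
  rw [Finset.sup_lt_iff (show (⊥ : ℕ) < δ from hδ)]
  intro u hu
  have hdeg : ∑ m, u m = δ := aux_deg_univ hf hu
  rw [aeval_monomial, monomial_eq,
    Finsupp.prod_fintype _ _ (fun i => pow_zero _), Finsupp.prod_fintype _ _ (fun i => pow_zero _),
    algebraMap_eq, ← mul_sub]
  refine lt_of_le_of_lt (totalDegree_mul _ _) ?_
  rw [totalDegree_C, zero_add]
  rcases aux_prod_diff v u Finset.univ with he | hl
  · rw [he, sub_self]
    simp; omega
  · rw [hdeg] at hl
    exact hl

lemma aux_shift_component {σ : Type*} [Fintype σ] [DecidableEq σ] (v : σ → k)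
    {f : MvPolynomial σ k} {δ : ℕ} (hf : f.IsHomogeneous δ) (hδ : 1 ≤ δ) {j : ℕ} (hj : δ ≤ j) :
    homogeneousComponent j (aeval (fun m => C (v m) + X m) f : MvPolynomial σ k)
      = if j = δ then f else 0 := by
  have h2 : (aeval (fun m => C (v m) + X m) f : MvPolynomial σ k)
      = f + ((aeval (fun m => C (v m) + X m) f : MvPolynomial σ k) - f) := by ring
  rw [h2, map_add, homogeneousComponent_of_mem ((mem_homogeneousSubmodule _ _).mpr hf),
    homogeneousComponent_eq_zero _ _ (lt_of_lt_of_le (aux_shift_diff v hf hδ) hj), add_zero]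

lemma aux_hom_aeval {σ : Type*} [Fintype σ] {g : MvPolynomial σ k} {j : ℕ}
    (hg : g.IsHomogeneous j) (c : σ → k) :
    aeval (fun m => Polynomial.C (c m) * Polynomial.X : σ → Polynomial k) g
      = Polynomial.C (eval c g) * Polynomial.X ^ j := by
  have hev : eval c g = ∑ u ∈ g.support, coeff u g * ∏ m, c m ^ u m := by
    conv_lhs => rw [g.as_sum, map_sum]
    refine Finset.sum_congr rfl fun u hu => ?_
    rw [eval_monomial, Finsupp.prod_fintype _ _ fun i => pow_zero _]
  rw [hev, map_sum, Finset.sum_mul]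
  conv_lhs => rw [g.as_sum, map_sum]
  refine Finset.sum_congr rfl fun u hu => ?_
  have hdeg : ∑ m, u m = j := aux_deg_univ hg hu
  rw [aeval_monomial, Finsupp.prod_fintype _ _ fun i => pow_zero _]
  simp only [mul_pow, Finset.prod_mul_distrib, ← Polynomial.C_pow, ← map_prod,
    Finset.prod_pow_eq_pow_sum, hdeg, Polynomial.algebraMap_eq]
  rw [map_mul, mul_assoc]

lemma aux_deg_two {F : MvPolynomial (Fin 2) k} {δ : ℕ} (hF : F.IsHomogeneous δ)
    {w : Fin 2 →₀ ℕ} (hw : w ∈ F.support) : w 0 + w 1 = δ := by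
  have h1 : w.degree = δ := by
    rw [Finsupp.degree_eq_weight_one]
    exact hF (mem_support_iff.mp hw)
  rw [← h1, Finsupp.degree_apply]
  rw [Finset.sum_subset (Finset.subset_univ w.support)
    (fun i _ hi => Finsupp.notMem_support_iff.mp hi), Fin.sum_univ_two]

lemma aux_homog_two {F : MvPolynomial (Fin 2) k} {δ : ℕ} (hF : F.IsHomogeneous δ)
    (h : aeval ![(1 : Polynomial k), Polynomial.X] F = 0) : F = 0 := by
  have expand : aeval ![(1 : Polynomial k), Polynomial.X] F
      = ∑ w ∈ F.support, Polynomial.C (coeff w F) * Polynomial.X ^ (w 1) := by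
    conv_lhs => rw [F.as_sum, map_sum]
    refine Finset.sum_congr rfl fun w hw => ?_
    rw [aeval_monomial, Finsupp.prod_fintype _ _ fun i => pow_zero _, Fin.prod_univ_two]
    simp [Polynomial.algebraMap_eq]
  rw [expand] at h
  ext u
  rw [coeff_zero]
  by_cases hu : u ∈ F.support
  swap
  · exact notMem_support_iff.mp hu
  have hco := congrArg (fun p => Polynomial.coeff p (u 1)) h
  simp only [Polynomial.finset_sum_coeff, Polynomial.coeff_zero] at hco
  rw [Finset.sum_eq_single_of_mem u hu ?side] at hco
  · rw [Polynomial.coeff_C_mul, Polynomial.coeff_X_pow, if_pos rfl, mul_one] at hco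
    exact hco
  case side =>
    intro w hw hne
    rw [Polynomial.coeff_C_mul, Polynomial.coeff_X_pow]
    have hne1 : ¬ (u 1 = w 1) := by
      intro heq
      apply hne
      have dw : w 0 + w 1 = δ := aux_deg_two hF hw
      have du : u 0 + u 1 = δ := aux_deg_two hF hu
      have h0 : w 0 = u 0 := by omega
      ext i
      match i with
      | 0 => exact h0
      | 1 => exact heq.symm
    simp [hne1]

lemma aux_aeval_eq_eval {σ : Type*} (g : σ → k) (p : MvPolynomial σ k) :
    aeval g p = eval g p := by
  rw [aeval_def, Algebra.algebraMap_self]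
  rfl

lemma aux_line {σ : Type*} [Fintype σ] [DecidableEq σ] {f : MvPolynomial σ k} {δ : ℕ}
    (hf : f.IsHomogeneous δ) (hδ : 1 ≤ δ) (a c : σ → k) (ha : eval a f = 0)
    (hc : ∀ j, 1 ≤ j → j ≤ δ →
      eval c (homogeneousComponent j (aeval (fun m => C (a m) + X m) f : MvPolynomial σ k)) = 0) :
    aeval (fun m => C (a m) * X 0 + C (c m) * X 1) f = (0 : MvPolynomial (Fin 2) k) := by
  set sh : MvPolynomial σ k := aeval (fun m => C (a m) + X m) f with hsh
  -- all component evaluations vanish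
  have hall : ∀ j : ℕ, eval c (homogeneousComponent j sh) = 0 := by
    intro j
    rcases Nat.eq_zero_or_pos j with hj0 | hj1
    · subst hj0
      rw [homogeneousComponent_zero, eval_C]
      have h1 : coeff 0 sh = eval (fun _ => (0 : k)) sh := by
        rw [eval_zero']
        rfl
      rw [h1, ← aux_aeval_eq_eval, hsh, comp_aeval_apply]
      have h2 : (fun m => aeval (fun _ => (0:k)) ((fun m => C (a m) + X m) m)) = a := by
        funext m
        simp
      rw [h2, aux_aeval_eq_eval]
      exact ha
    rcases le_or_gt j δ with hjd | hjd
    · exact hc j hj1 hjd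
    · rw [aux_shift_component a hf hδ (le_of_lt hjd), if_neg (by omega)]
      simp
  -- the one-variable specialization is zero
  have hD : aeval (fun m => Polynomial.C (a m) + Polynomial.C (c m) * Polynomial.X) f
      = (0 : Polynomial k) := by
    have h3 : aeval (fun m => Polynomial.C (a m) + Polynomial.C (c m) * Polynomial.X) f
        = aeval (fun m => Polynomial.C (c m) * Polynomial.X : σ → Polynomial k) sh := by
      have hv : (fun i => (aeval fun m => Polynomial.C (c m) * Polynomial.X)
            ((fun m => (C (a m) + X m : MvPolynomial σ k)) i))
          = fun m => Polynomial.C (a m) + Polynomial.C (c m) * Polynomial.X := by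
        funext m
        simp [Polynomial.algebraMap_eq]
      rw [hsh, comp_aeval_apply, hv]
    rw [h3]
    conv_lhs => rw [← sum_homogeneousComponent sh, map_sum]
    refine Finset.sum_eq_zero fun j _ => ?_
    rw [aux_hom_aeval (homogeneousComponent_isHomogeneous j sh) c, hall j]
    simp
  -- homogeneity of the target
  have hF : (aeval (fun m => C (a m) * X 0 + C (c m) * X 1) f :
      MvPolynomial (Fin 2) k).IsHomogeneous δ := by
    have := hf.aeval (fun m => (C (a m) * X 0 + C (c m) * X 1 : MvPolynomial (Fin 2) k))
      (fun m => (isHomogeneous_C_mul_X (a m) 0).add (isHomogeneous_C_mul_X (c m) 1))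
    simpa using this
  refine aux_homog_two hF ?_
  rw [comp_aeval_apply]
  have h4 : (fun m => aeval ![(1 : Polynomial k), Polynomial.X]
        ((fun m => (C (a m) * X 0 + C (c m) * X 1 : MvPolynomial (Fin 2) k)) m))
      = fun m => Polynomial.C (a m) + Polynomial.C (c m) * Polynomial.X := by
    funext m
    simp [Polynomial.algebraMap_eq]
  rw [h4, hD]

abbrev SysIdx (r : ℕ) (d : Fin r → ℕ) := Σ i : Fin r, ((Fin (d i - 1) ⊕ Fin (d i - 1)) ⊕ Unit)

noncomputable def sysG {k : Type*} [Field k] {n r : ℕ} (f : Fin r → MvPolynomial (Fin (n + 1)) k)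
    (d : Fin r → ℕ) (a b : Fin (n + 1) → k) : SysIdx r d → MvPolynomial (Fin (n + 1)) k
  | ⟨i, .inl (.inl t)⟩ =>
      homogeneousComponent ((t : ℕ) + 1) (aeval (fun m => C (a m) + X m) (f i))
  | ⟨i, .inl (.inr t)⟩ =>
      homogeneousComponent ((t : ℕ) + 1) (aeval (fun m => C (b m) + X m) (f i))
  | ⟨i, .inr _⟩ => f i

def sysE {r : ℕ} (d : Fin r → ℕ) : SysIdx r d → ℕ
  | ⟨_, .inl (.inl t)⟩ => (t : ℕ) + 1
  | ⟨_, .inl (.inr t)⟩ => (t : ℕ) + 1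
  | ⟨i, .inr _⟩ => d i

lemma aux_gauss (e : ℕ) : 2 * (∑ t ∈ Finset.range e, (t + 1)) + (e + 1) = (e + 1) ^ 2 := by
  induction e with
  | zero => simp
  | succ e ih =>
    rw [Finset.sum_range_succ, Nat.mul_add]
    have h : (e + 1 + 1) ^ 2 = (e + 1) ^ 2 + 2 * (e + 1) + 1 := by ring
    linarith

lemma sysE_sum {r : ℕ} (d : Fin r → ℕ) (hd : ∀ i, 1 ≤ d i) :
    ∑ x : SysIdx r d, sysE d x = ∑ i, d i ^ 2 := by
  rw [← Finset.univ_sigma_univ, Finset.sum_sigma]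
  refine Finset.sum_congr rfl fun i _ => ?_
  rw [Fintype.sum_sum_type, Fintype.sum_sum_type]
  simp only [sysE]
  obtain ⟨e, he⟩ : ∃ e, d i = e + 1 := ⟨d i - 1, by have := hd i; omega⟩
  rw [he]
  have h11 : e + 1 - 1 = e := by omega
  rw [h11, Fin.sum_univ_eq_sum_range (fun t => t + 1) e]
  have hg := aux_gauss e
  have hu : ∑ _x : Unit, (e + 1) = e + 1 := by simp
  rw [hu]
  linarith


end Aux

/-- If `k` satisfies the Tsen–Lang system-solvability property (every finite system of forms
whose degrees sum to less than the number of variables has a nontrivial common zero),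
`f₁, …, f_r ∈ k[X₀, …, X_n]` are homogeneous of degrees `d₁, …, d_r ≥ 1` with `∑ dᵢ² ≤ n`,
and `a, b ∈ k^{n+1}` are linearly independent common zeros of the `fᵢ`, then there is a
nonzero `c ∈ k^{n+1}` such that for each `i` the polynomials `fᵢ(s·a + t·c)` and
`fᵢ(s·b + t·c)` are zero in `k[s,t]`. -/
theorem statement1 {k : Type*} [Field k]
    (hTL : ∀ (N m : ℕ), 1 ≤ N →
      ∀ (g : Fin m → MvPolynomial (Fin N) k) (e : Fin m → ℕ),
        (∀ j, 1 ≤ e j) → (∀ j, (g j).IsHomogeneous (e j)) → (∑ j, e j) < N →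
          ∃ y : Fin N → k, y ≠ 0 ∧ ∀ j, eval y (g j) = 0)
    (n r : ℕ) (f : Fin r → MvPolynomial (Fin (n + 1)) k) (d : Fin r → ℕ)
    (hd : ∀ i, 1 ≤ d i) (hhom : ∀ i, (f i).IsHomogeneous (d i))
    (hsum : ∑ i, d i ^ 2 ≤ n)
    (a b : Fin (n + 1) → k) (hab : LinearIndependent k ![a, b])
    (ha : ∀ i, eval a (f i) = 0) (hb : ∀ i, eval b (f i) = 0) :
    ∃ c : Fin (n + 1) → k, c ≠ 0 ∧ ∀ i,
      aeval (fun m => C (a m) * X 0 + C (c m) * X 1) (f i) = (0 : MvPolynomial (Fin 2) k) ∧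
      aeval (fun m => C (b m) * X 0 + C (c m) * X 1) (f i) = (0 : MvPolynomial (Fin 2) k) := by
  classical
  set σe := Fintype.equivFin (SysIdx r d) with hσe
  have hdeg1 : ∀ x : SysIdx r d, 1 ≤ sysE d x := by
    rintro ⟨i, (t | t) | u⟩
    · simp [sysE]
    · simp [sysE]
    · exact hd i
  have hhomog : ∀ x : SysIdx r d, (sysG f d a b x).IsHomogeneous (sysE d x) := by
    rintro ⟨i, (t | t) | u⟩
    · exact homogeneousComponent_isHomogeneous _ _
    · exact homogeneousComponent_isHomogeneous _ _
    · exact hhom i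
  have hsum2 : (∑ j : Fin (Fintype.card (SysIdx r d)), sysE d (σe.symm j)) < n + 1 := by
    rw [Equiv.sum_comp σe.symm (sysE d), sysE_sum d hd]
    omega
  obtain ⟨y, hy0, hy⟩ := hTL (n + 1) (Fintype.card (SysIdx r d)) (by omega)
    (fun j => sysG f d a b (σe.symm j)) (fun j => sysE d (σe.symm j))
    (fun j => hdeg1 _) (fun j => hhomog _) hsum2
  have hy' : ∀ x : SysIdx r d, eval y (sysG f d a b x) = 0 := by
    intro x
    simpa using hy (σe x)
  have hcomp : ∀ (v : Fin (n + 1) → k), (∀ i, eval y (f i) = 0) → ∀ (i : Fin r),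
      (∀ t : Fin (d i - 1), eval y (homogeneousComponent ((t : ℕ) + 1)
        (aeval (fun m => C (v m) + X m) (f i) : MvPolynomial (Fin (n + 1)) k)) = 0) →
      ∀ j, 1 ≤ j → j ≤ d i →
      eval y (homogeneousComponent j
        (aeval (fun m => C (v m) + X m) (f i) : MvPolynomial (Fin (n + 1)) k)) = 0 := by
    intro v hf0 i hts j hj1 hjd
    rcases eq_or_lt_of_le hjd with hje | hjl
    · rw [aux_shift_component v (hhom i) (hd i) (le_of_eq hje.symm), if_pos hje]
      exact hf0 i
    · have ht : j - 1 < d i - 1 := by omega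
      have h5 := hts ⟨j - 1, ht⟩
      have hj' : (j - 1) + 1 = j := by omega
      rw [hj'] at h5
      exact h5
  have hf0 : ∀ i, eval y (f i) = 0 := fun i => hy' ⟨i, Sum.inr ()⟩
  refine ⟨y, hy0, fun i => ⟨?_, ?_⟩⟩
  · refine aux_line (hhom i) (hd i) a y (ha i) ?_
    exact hcomp a hf0 i (fun t => hy' ⟨i, Sum.inl (Sum.inl t)⟩)
  · refine aux_line (hhom i) (hd i) b y (hb i) ?_
    exact hcomp b hf0 i (fun t => hy' ⟨i, Sum.inl (Sum.inr t)⟩)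
end

section
/- Let k be a field, let f ∈ k[X_0, …, X_n] be a homogeneous polynomial of degree d ≥ 1, and let a ∈ k^{n+1} with f(a) = 0. For 0 ≤ j ≤ d let P_j ∈ k[X_0, …, X_n] be the coefficient of s^j in the polynomial obtained from f by the substitution X_m ↦ X_m + s·a_m in (k[X_0,…,X_n])[s]. If x ∈ k^{n+1} satisfies P_j(x) = 0 for all j = 0, …, d − 1 (in particular f(x) = P_0(x) = 0), then the polynomial f(s·a + t·x), obtained from f by the substitution X_m ↦ s·a_m + t·x_m, is the zero polynomial of k[s,t]; that is, the projective line through the points a and x is contained in the projective zero set of f. -/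
open MvPolynomial

lemma aux_hom_eval {k A : Type*} [CommSemiring k] [CommSemiring A] [Algebra k A] {σ : Type*}
    {q : MvPolynomial σ k} {e : ℕ} (hq : q.IsHomogeneous e) (x : σ → k) (y : A) :
    aeval (fun m => algebraMap k A (x m) * y) q = algebraMap k A (eval x q) * y ^ e := by
  conv_lhs => rw [q.as_sum]
  conv_rhs => rw [q.as_sum]
  rw [map_sum, map_sum, map_sum, Finset.sum_mul]
  refine Finset.sum_congr rfl fun u hu => ?_
  have hdeg : ∑ i ∈ u.support, u i = e := by
    have := hq (mem_support_iff.mp hu)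
    simpa [Finsupp.weight_apply, Finsupp.sum] using this
  rw [aeval_monomial, eval_monomial]
  simp only [mul_pow, Finsupp.prod, Finset.prod_mul_distrib, ← map_pow, ← map_prod,
    Finset.prod_pow_eq_pow_sum, hdeg, map_mul]
  ring

/-- Let `f ∈ k[X₀, …, X_n]` be homogeneous of degree `d ≥ 1`, `a ∈ k^{n+1}` with
`f(a) = 0`, and for each `j` let `P_j` be the `s^j`-coefficient of the polynomial obtained
from `f` by substituting `X_m ↦ X_m + s·a_m` in `(k[X₀,…,X_n])[s]`. If `x ∈ k^{n+1}`
satisfies `P_j(x) = 0` for all `j = 0, …, d - 1`, then `f(s·a + t·x)` is the zero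
polynomial of `k[s,t]`, i.e. the projective line through `a` and `x` lies in the
projective zero set of `f`. -/
theorem statement4 {k : Type*} [Field k] (n d : ℕ) (hd : 1 ≤ d)
    (f : MvPolynomial (Fin (n + 1)) k) (hf : f.IsHomogeneous d)
    (a : Fin (n + 1) → k) (ha : eval a f = 0)
    (P : ℕ → MvPolynomial (Fin (n + 1)) k)
    (hP : ∀ j, P j = (aeval
      (fun m => Polynomial.C (X m) + Polynomial.C (C (a m)) * Polynomial.X) f).coeff j)
    (x : Fin (n + 1) → k) (hx : ∀ j < d, eval x (P j) = 0) :
    aeval (fun m => C (a m) * X 0 + C (x m) * X 1) f = (0 : MvPolynomial (Fin 2) k) := by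
  set F : Polynomial (MvPolynomial (Fin (n + 1)) k) :=
    aeval (fun m => Polynomial.C (X m) + Polynomial.C (C (a m)) * Polynomial.X) f with hF
  set G : MvPolynomial (Fin (n + 1 + 1)) k :=
    aeval (fun m : Fin (n + 1) => X m.succ + C (a m) * X 0) f with hG
  -- G is homogeneous of degree d
  have hGhom : G.IsHomogeneous d := by
    have := hf.aeval (fun m : Fin (n + 1) => X m.succ + C (a m) * X 0)
      (fun i => (isHomogeneous_X _ _).add ((isHomogeneous_X _ _).C_mul _))
    simpa only [one_mul] using this
  -- finSuccEquiv sends G to F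
  have hGF : finSuccEquiv k (n + 1) G = F := by
    rw [hG, hF]
    have : ((finSuccEquiv k (n + 1) : MvPolynomial (Fin (n + 1 + 1)) k ≃ₐ[k] _).toAlgHom.comp
        (aeval (fun m : Fin (n + 1) => X m.succ + C (a m) * X 0)))
        = aeval (fun m => Polynomial.C (X m) + Polynomial.C (C (a m)) * Polynomial.X) := by
      apply MvPolynomial.algHom_ext
      intro m
      simp [finSuccEquiv_apply]
    exact congrFun (congrArg DFunLike.coe this) f
  -- P j homogeneous of degree d - j for j ≤ d
  have hPhom : ∀ j ≤ d, (P j).IsHomogeneous (d - j) := by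
    intro j hj
    rw [hP, ← hGF]
    exact hGhom.finSuccEquiv_coeff_isHomogeneous j (d - j) (by omega)
  -- P j = 0 for j > d
  have hPtop : ∀ j, d < j → P j = 0 := by
    intro j hj
    rw [hP, ← hGF]
    apply Polynomial.coeff_eq_zero_of_natDegree_lt
    rw [natDegree_finSuccEquiv]
    exact lt_of_le_of_lt ((degreeOf_le_totalDegree G 0).trans hGhom.totalDegree_le) hj
  -- eval a (P j) = 0 for all j
  have hPa : ∀ j, eval a (P j) = 0 := by
    have hmap : F.map (eval a : MvPolynomial (Fin (n + 1)) k →+* k)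
        = aeval (fun m => algebraMap k (Polynomial k) (a m) * (1 + Polynomial.X)) f := by
      rw [hF]
      have : ((Polynomial.mapAlgHom (aeval a : MvPolynomial (Fin (n + 1)) k →ₐ[k] k)).comp
          (aeval (fun m => Polynomial.C (X m) + Polynomial.C (C (a m)) * Polynomial.X)))
          = aeval (fun m => algebraMap k (Polynomial k) (a m) * (1 + Polynomial.X)) := by
        apply MvPolynomial.algHom_ext
        intro m
        simp [Polynomial.algebraMap_apply, mul_add]
      have h2 := congrFun (congrArg DFunLike.coe this) f
      simpa using h2
    have hz : F.map (eval a : MvPolynomial (Fin (n + 1)) k →+* k) = 0 := by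
      rw [hmap, aux_hom_eval hf a (1 + Polynomial.X), ha, map_zero, zero_mul]
    intro j
    have := congrArg (fun p => Polynomial.coeff p j) hz
    simpa [Polynomial.coeff_map, ← hP] using this
  -- P d = 0
  have hPd : P d = 0 := by
    have h0 : (P d).IsHomogeneous 0 := by simpa using hPhom d le_rfl
    have hC : P d = C (coeff 0 (P d)) := by
      ext u
      by_cases hu : u = 0
      · simp [hu]
      · rw [h0.coeff_eq_zero (by simpa [Finsupp.degree_eq_zero_iff] using hu)]
        simp [coeff_C, Ne.symm hu]
    have h1 := hPa d
    rw [hC] at h1 ⊢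
    rw [eval_C] at h1
    rw [h1, map_zero]
  -- final assembly
  set ρ : MvPolynomial (Fin (n + 1)) k →+* MvPolynomial (Fin 2) k :=
    (aeval (fun m => C (x m) * X 1) : MvPolynomial (Fin (n + 1)) k →ₐ[k] _).toRingHom with hρ
  have hkey : aeval (fun m => C (a m) * X 0 + C (x m) * X 1) f
      = Polynomial.eval₂ ρ (X 0) F := by
    rw [hF]
    have hcomp : (Polynomial.eval₂RingHom ρ (X 0 : MvPolynomial (Fin 2) k)).comp
        ((aeval (fun m => Polynomial.C (X m) + Polynomial.C (C (a m)) * Polynomial.X) :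
          MvPolynomial (Fin (n + 1)) k →ₐ[k] _).toRingHom)
        = ((aeval (fun m => C (a m) * X 0 + C (x m) * X 1) :
            MvPolynomial (Fin (n + 1)) k →ₐ[k] MvPolynomial (Fin 2) k)).toRingHom := by
      apply MvPolynomial.ringHom_ext
      · intro r
        simp [hρ, algebraMap_eq]
      · intro m
        simp [hρ, algebraMap_eq]
        ring
    have := congrFun (congrArg DFunLike.coe hcomp) f
    simpa using this.symm
  have hall : ∀ j, ρ (F.coeff j) = 0 := by
    intro j
    rw [← hP]
    rcases lt_trichotomy j d with h | h | h
    · have := aux_hom_eval (hPhom j h.le) x (X 1 : MvPolynomial (Fin 2) k)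
      rw [hx j h, map_zero, zero_mul] at this
      simpa [hρ, algebraMap_eq] using this
    · rw [h, hPd, map_zero]
    · rw [hPtop j h, map_zero]
  rw [hkey, Polynomial.eval₂_eq_eval_map]
  have : F.map ρ = 0 := by
    ext j
    simp [Polynomial.coeff_map, hall j]
  rw [this, Polynomial.eval_zero]
end
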